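/- Let t ≠ {∅} be a full binary tree with h = S(t) ≥ 1, let u be the lexicographically maximal vertex of t with S_u(t) = h, and define t^free = θ_{u1}t if h is even and θ_{u2}t if h is odd, and t^fix = θ_{u2}t if h is even and θ_{u1}t if h is odd. Then S(t^fix) = ⌈h/2⌉ − 1 = ⌊(h−1)/2⌋, and ⌊h/2⌋ ≤ S(t^free) ≤ h − 1. -/

import Mathlib

/-- Words over the alphabet {1,2}, encoded as lists of booleans (`false` = 1, `true` = 2). -/
abbrev Word := List Bool

/-- Longest common prefix of two words (`u ∧ v`). -/
def lcp : Word → Word → Word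
  | a :: as, b :: bs => if a = b then a :: lcp as bs else []
  | _, _ => []

/-- The lexicographic (strict) order on words; a strict prefix is smaller. -/
def wlex (u v : Word) : Prop := List.Lex (· < ·) u v

/-- A binary tree: a finite, prefix-closed set of words containing the empty word. -/
def IsBinaryTree (t : Set Word) : Prop :=
  t.Finite ∧ ([] : Word) ∈ t ∧ ∀ u ∈ t, ∀ v : Word, v <+: u → v ∈ t

/-- Fullness: each vertex has either zero or two children. -/
def IsFull (t : Set Word) : Prop :=
  ∀ u ∈ t, (u ++ [false] ∈ t ↔ u ++ [true] ∈ t)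

def IsFullBinaryTree (t : Set Word) : Prop := IsBinaryTree t ∧ IsFull t

/-- `φ` is an embedding of `t` into `t'`: injective on `t`, strictly increasing for the
lexicographic order, and preserving longest common prefixes. -/
def IsEmbedding (t t' : Set Word) (φ : Word → Word) : Prop :=
  (∀ u ∈ t, φ u ∈ t') ∧
  (∀ u ∈ t, ∀ v ∈ t, u ≠ v → φ u ≠ φ v) ∧
  (∀ u ∈ t, ∀ v ∈ t, wlex u v → wlex (φ u) (φ v)) ∧
  (∀ u ∈ t, ∀ v ∈ t, φ (lcp u v) = lcp (φ u) (φ v))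

/-- `t` can be embedded in `t'`. -/
def Embeds (t t' : Set Word) : Prop := ∃ φ, IsEmbedding t t' φ

/-- `graft b t = b · t`, the copy of `t` rooted at the child `b` of the root. -/
def graft (b : Bool) (t : Set Word) : Set Word := (fun w => b :: w) '' t

/-- The interpolating trees: τ₀ = {∅}, τ₁ = {∅,1,2},
τ_{2m} = {∅} ∪ 1·τ_m ∪ 2·τ_{m-1}, τ_{2m+1} = {∅} ∪ 1·τ_m ∪ 2·τ_m (for m ≥ 1). -/
def tau : ℕ → Set Word
  | 0 => {[]}
  | 1 => {[], [false], [true]}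
  | n + 2 => {[]} ∪ graft false (tau ((n + 2) / 2)) ∪ graft true (tau ((n + 1) / 2))
termination_by n => n
decreasing_by all_goals omega

/-- The subtree of `t` rooted at `u`: θ_u t = {v : uv ∈ t}. -/
def subtreeAt (u : Word) (t : Set Word) : Set Word := {v | u ++ v ∈ t}

/-- The refined Horton–Strahler number S(t) = max {r : τ_r embeds in t}. -/
noncomputable def RHS (t : Set Word) : ℕ := sSup {r | Embeds (tau r) t}

/-- S_u(t) = S(θ_u t). -/
noncomputable def Sv (u : Word) (t : Set Word) : ℕ := RHS (subtreeAt u t)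

/- ## lcp lemmas -/

lemma lcp_nil_left (x : Word) : lcp [] x = [] := by cases x <;> rfl
lemma lcp_nil_right (x : Word) : lcp x [] = [] := by cases x <;> rfl
lemma lcp_cons_same (a : Bool) (x y : Word) : lcp (a::x) (a::y) = a :: lcp x y := by
  simp [lcp]
lemma lcp_cons_ne {a b : Bool} (h : a ≠ b) (x y : Word) : lcp (a::x) (b::y) = [] := by
  simp [lcp, h]

lemma lcp_append (p x y : Word) : lcp (p ++ x) (p ++ y) = p ++ lcp x y := by
  induction p with
  | nil => simp
  | cons a p ih => simpa [lcp_cons_same] using ih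

lemma lcp_self_append (u w : Word) : lcp u (u ++ w) = u := by
  have := lcp_append u [] w
  simpa [lcp_nil_left] using this

lemma lcp_append_self (u w : Word) : lcp (u ++ w) u = u := by
  have := lcp_append u w []
  simpa [lcp_nil_right] using this

lemma lcp_self (u : Word) : lcp u u = u := by simpa using lcp_self_append u []

lemma lcp_prefix_left : ∀ x y : Word, lcp x y <+: x := by
  intro x
  induction x with
  | nil => intro y; simp [lcp_nil_left]
  | cons a x ih =>
    intro y
    cases y with
    | nil => simp [lcp_nil_right]
    | cons b y =>
      by_cases h : a = b
      · subst h; rw [lcp_cons_same]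
        obtain ⟨c, hc⟩ := ih y
        exact ⟨c, by simp [hc]⟩
      · rw [lcp_cons_ne h]; exact List.nil_prefix

/- ## wlex lemmas -/

lemma wlex_nil_cons (a : Bool) (l : Word) : wlex [] (a :: l) := List.Lex.nil

lemma not_wlex_nil (x : Word) : ¬ wlex x [] := by
  intro h; cases h

lemma wlex_append (p : Word) {x y : Word} : wlex (p ++ x) (p ++ y) ↔ wlex x y := by
  induction p with
  | nil => simp
  | cons a p ih =>
    constructor
    · intro h
      rcases h with _ | h | h
      · exact absurd h (by simp)
      · exact ih.1 h
    · intro h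
      exact List.Lex.cons (ih.2 h)

lemma wlex_false_true (x y : Word) : wlex (false :: x) (true :: y) :=
  List.Lex.rel (by decide)

lemma wlex_cons_iff (a : Bool) {x y : Word} : wlex (a :: x) (a :: y) ↔ wlex x y :=
  wlex_append [a]


/- ## tau structural lemmas -/

lemma mem_graft_iff {b : Bool} {A : Set Word} {w : Word} :
    w ∈ graft b A ↔ ∃ x ∈ A, w = b :: x := by
  simp [graft, eq_comm]

lemma tau_succ {n : ℕ} (hn : 1 ≤ n) :
    tau n = {[]} ∪ graft false (tau (n / 2)) ∪ graft true (tau ((n - 1) / 2)) := by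
  match n, hn with
  | 1, _ =>
    show tau 1 = {[]} ∪ graft false (tau 0) ∪ graft true (tau 0)
    rw [show tau 1 = {[], [false], [true]} from by rw [tau], show tau 0 = {[]} from by rw [tau]]
    ext w
    simp [graft]
    tauto
  | (k + 2), _ =>
    show tau (k+2) = {[]} ∪ graft false (tau ((k+2) / 2)) ∪ graft true (tau ((k+1) / 2))
    rw [tau]

lemma nil_mem_tau (n : ℕ) : [] ∈ tau n := by
  match n with
  | 0 => rw [tau]; rfl
  | 1 => rw [tau]; left; rfl
  | (k+2) => rw [tau]; left; left; rfl

lemma mem_tau_iff {n : ℕ} (hn : 1 ≤ n) {w : Word} :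
    w ∈ tau n ↔ w = [] ∨ (∃ x ∈ tau (n / 2), w = false :: x) ∨
      (∃ y ∈ tau ((n - 1) / 2), w = true :: y) := by
  rw [tau_succ hn]
  simp [mem_graft_iff]
  exact or_assoc

lemma false_mem_tau {n : ℕ} (hn : 1 ≤ n) : [false] ∈ tau n := by
  rw [mem_tau_iff hn]
  exact Or.inr (Or.inl ⟨[], nil_mem_tau _, rfl⟩)

lemma true_mem_tau {n : ℕ} (hn : 1 ≤ n) : [true] ∈ tau n := by
  rw [mem_tau_iff hn]
  exact Or.inr (Or.inr ⟨[], nil_mem_tau _, rfl⟩)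

lemma tau_finite (n : ℕ) : (tau n).Finite := by
  induction n using Nat.strong_induction_on with
  | _ n ih =>
    match n with
    | 0 => rw [tau]; exact Set.finite_singleton _
    | (m+1) =>
      rw [tau_succ (by omega)]
      exact (((Set.finite_singleton _).union ((ih _ (by omega)).image _)).union
        ((ih _ (by omega)).image _))

lemma tau_prefix_closed : ∀ n, ∀ w ∈ tau n, ∀ v : Word, v <+: w → v ∈ tau n := by
  intro n
  induction n using Nat.strong_induction_on with
  | _ n ih =>
    intro w hw v hv
    match n with
    | 0 =>
      rw [tau] at hw ⊢
      rcases hw with rfl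
      simpa using List.prefix_nil.1 hv
    | (m+1) =>
      rw [mem_tau_iff (by omega)] at hw ⊢
      rcases hw with rfl | ⟨x, hx, rfl⟩ | ⟨y, hy, rfl⟩
      · exact Or.inl (by simpa using List.prefix_nil.1 hv)
      · cases v with
        | nil => exact Or.inl rfl
        | cons c v =>
          obtain ⟨rfl, hv'⟩ := List.cons_prefix_cons.1 hv
          exact Or.inr (Or.inl ⟨v, ih _ (by omega) _ hx _ hv', rfl⟩)
      · cases v with
        | nil => exact Or.inl rfl
        | cons c v =>
          obtain ⟨rfl, hv'⟩ := List.cons_prefix_cons.1 hv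
          exact Or.inr (Or.inr ⟨v, ih _ (by omega) _ hy _ hv', rfl⟩)

lemma subtreeAt_false_tau {n : ℕ} (hn : 1 ≤ n) :
    subtreeAt [false] (tau n) = tau (n / 2) := by
  ext w
  simp only [subtreeAt, Set.mem_setOf_eq, List.cons_append, List.nil_append]
  rw [mem_tau_iff hn]
  constructor
  · rintro (h | ⟨x, hx, hx'⟩ | ⟨y, hy, hy'⟩)
    · simp at h
    · obtain rfl : w = x := by injection hx'
      exact hx
    · exact absurd hy' (by simp)
  · intro hw
    exact Or.inr (Or.inl ⟨w, hw, rfl⟩)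

lemma subtreeAt_true_tau {n : ℕ} (hn : 1 ≤ n) :
    subtreeAt [true] (tau n) = tau ((n - 1) / 2) := by
  ext w
  simp only [subtreeAt, Set.mem_setOf_eq, List.cons_append, List.nil_append]
  rw [mem_tau_iff hn]
  constructor
  · rintro (h | ⟨x, hx, hx'⟩ | ⟨y, hy, hy'⟩)
    · simp at h
    · exact absurd hx' (by simp)
    · obtain rfl : w = y := by injection hy'
      exact hy
  · intro hw
    exact Or.inr (Or.inr ⟨w, hw, rfl⟩)

/- ## Embeds basics -/

lemma embeds_refl (s : Set Word) : Embeds s s := by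
  exact ⟨id, fun u hu => hu, fun u _ v _ h => h, fun u _ v _ h => h, fun u _ v _ => rfl⟩

lemma Embeds.trans {a b c : Set Word} (h1 : Embeds a b) (h2 : Embeds b c) : Embeds a c := by
  obtain ⟨φ, mφ, iφ, oφ, lφ⟩ := h1
  obtain ⟨ψ, mψ, iψ, oψ, lψ⟩ := h2
  refine ⟨ψ ∘ φ, fun u hu => mψ _ (mφ _ hu), ?_, ?_, ?_⟩
  · intro u hu v hv huv
    exact iψ _ (mφ _ hu) _ (mφ _ hv) (iφ _ hu _ hv huv)
  · intro u hu v hv huv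
    exact oψ _ (mφ _ hu) _ (mφ _ hv) (oφ _ hu _ hv huv)
  · intro u hu v hv
    simp only [Function.comp_apply]
    rw [lφ _ hu _ hv, lψ _ (mφ _ hu) _ (mφ _ hv)]

lemma Embeds.ncard_le {a b : Set Word} (h : Embeds a b) (hb : b.Finite) :
    a.ncard ≤ b.ncard := by
  obtain ⟨φ, mφ, iφ, _, _⟩ := h
  have hinj : Set.InjOn φ a := by
    intro u hu v hv he
    by_contra hne
    exact iφ _ hu _ hv hne he
  calc a.ncard = (φ '' a).ncard := (Set.ncard_image_of_injOn hinj).symm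
    _ ≤ b.ncard := Set.ncard_le_ncard (by rintro _ ⟨u, hu, rfl⟩; exact mφ _ hu) hb

lemma embeds_tau_zero {t : Set Word} (h0 : [] ∈ t) : Embeds (tau 0) t := by
  have h : ∀ w ∈ tau 0, w = ([] : Word) := by
    intro w hw; rw [tau] at hw; exact hw
  refine ⟨fun _ => [], fun u _ => h0, ?_, ?_, ?_⟩
  · intro u hu v hv huv; exact absurd ((h u hu).trans (h v hv).symm) huv
  · intro u hu v hv huv
    rw [h u hu, h v hv] at huv
    exact absurd huv (not_wlex_nil _)
  · intro u hu v hv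
    rw [h u hu, h v hv]
    simp [lcp_nil_left]

lemma embeds_subtree_append (u v : Word) (t : Set Word) :
    Embeds (subtreeAt (u ++ v) t) (subtreeAt u t) := by
  refine ⟨fun w => v ++ w, ?_, ?_, ?_, ?_⟩
  · intro w hw
    show u ++ (v ++ w) ∈ t
    rw [← List.append_assoc]
    exact hw
  · intro w _ w' _ hne he
    exact hne (List.append_cancel_left he)
  · intro w _ w' _ hw
    exact (wlex_append v).2 hw
  · intro w _ w' _
    exact (lcp_append v w w').symm

/- ## cardinality of tau -/

lemma tau_ncard_formula {n : ℕ} (hn : 1 ≤ n) :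
    (tau n).ncard = 1 + (tau (n / 2)).ncard + (tau ((n - 1) / 2)).ncard := by
  rw [tau_succ hn]
  have hfA : (graft false (tau (n / 2))).Finite := (tau_finite _).image _
  have hfB : (graft true (tau ((n - 1) / 2))).Finite := (tau_finite _).image _
  have hconsinj : ∀ b : Bool, Function.Injective (fun w : Word => b :: w) := by
    intro b w w' he; injection he
  rw [Set.ncard_union_eq ?_ ((Set.finite_singleton _).union hfA) hfB,
      Set.ncard_union_eq ?_ (Set.finite_singleton _) hfA]
  · rw [Set.ncard_singleton, graft, graft,
      Set.ncard_image_of_injective _ (hconsinj false),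
      Set.ncard_image_of_injective _ (hconsinj true)]
  · rw [Set.disjoint_left]
    rintro w hw hw'
    rw [mem_graft_iff] at hw'
    obtain ⟨x, _, rfl⟩ := hw'
    simp at hw
  · rw [Set.disjoint_left]
    rintro w hw hw'
    rw [mem_graft_iff] at hw'
    obtain ⟨y, _, rfl⟩ := hw'
    rcases hw with hw | hw
    · simp at hw
    · rw [mem_graft_iff] at hw
      obtain ⟨x, _, he⟩ := hw
      simp at he

lemma tau_ncard_zero : (tau 0).ncard = 1 := by
  rw [tau]; simp

lemma tau_ncard_lt : ∀ n, (tau n).ncard < (tau (n + 1)).ncard := by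
  intro n
  induction n using Nat.strong_induction_on with
  | _ n ih =>
    match n with
    | 0 =>
      rw [tau_ncard_zero, tau_ncard_formula (le_refl 1)]
      simp [tau_ncard_zero]
    | (m+1) =>
      rw [tau_ncard_formula (n := m + 2) (by omega), tau_ncard_formula (n := m + 1) (by omega)]
      have h1 : (m + 2) / 2 = m / 2 + 1 := by omega
      have h2 : (m + 2 - 1) / 2 = (m + 1) / 2 := by omega
      have h3 : (m + 1 - 1) / 2 = m / 2 := by omega
      rw [h1, h2, h3]
      have hA := ih (m / 2) (by omega)
      have hB : (tau ((m+1)/2)).ncard ≤ (tau ((m+1+1)/2)).ncard := by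
        rcases Nat.lt_or_ge ((m+1)/2) ((m+2)/2) with hlt | hge
        · have : (m+2)/2 = (m+1)/2 + 1 := by omega
          rw [show (m+1+1)/2 = (m+1)/2 + 1 from this]
          exact le_of_lt (ih _ (by omega))
        · have : (m+1+1)/2 = (m+1)/2 := by omega
          rw [this]
      omega

lemma tau_ncard_strictMono : StrictMono (fun n => (tau n).ncard) :=
  strictMono_nat_of_lt_succ tau_ncard_lt

lemma le_tau_ncard (n : ℕ) : n ≤ (tau n).ncard := tau_ncard_strictMono.le_apply

/- ## the build lemma -/

lemma embeds_node {s : Set Word} {n : ℕ} (hn : 1 ≤ n) (v : Word) (hv : v ∈ s)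
    (h1 : Embeds (tau (n / 2)) (subtreeAt (v ++ [false]) s))
    (h2 : Embeds (tau ((n - 1) / 2)) (subtreeAt (v ++ [true]) s)) :
    Embeds (tau n) s := by
  obtain ⟨ψ1, m1, i1, o1, l1⟩ := h1
  obtain ⟨ψ2, m2, i2, o2, l2⟩ := h2
  set φ : Word → Word := fun w => match w with
    | [] => v
    | false :: x => v ++ false :: ψ1 x
    | true :: y => v ++ true :: ψ2 y with hφ
  have φnil : φ [] = v := rfl
  have φf : ∀ x, φ (false :: x) = (v ++ [false]) ++ ψ1 x := by intro x; simp [hφ]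
  have φt : ∀ y, φ (true :: y) = (v ++ [true]) ++ ψ2 y := by intro y; simp [hφ]
  refine ⟨φ, ?_, ?_, ?_, ?_⟩
  · intro w hw
    rw [mem_tau_iff hn] at hw
    rcases hw with rfl | ⟨x, hx, rfl⟩ | ⟨y, hy, rfl⟩
    · exact hv
    · rw [φf]; exact m1 _ hx
    · rw [φt]; exact m2 _ hy
  · intro w hw w' hw' hne
    rw [mem_tau_iff hn] at hw hw'
    rcases hw with rfl | ⟨x, hx, rfl⟩ | ⟨y, hy, rfl⟩ <;>
      rcases hw' with rfl | ⟨x', hx', rfl⟩ | ⟨y', hy', rfl⟩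
    · exact absurd rfl hne
    · rw [φnil, φf]; intro he
      have := congrArg List.length he; simp at this
    · rw [φnil, φt]; intro he
      have := congrArg List.length he; simp at this
    · rw [φnil, φf]; intro he
      have := congrArg List.length he; simp at this
    · rw [φf, φf]; intro he
      have hxx : x ≠ x' := fun h => hne (by rw [h])
      exact i1 _ hx _ hx' hxx (List.append_cancel_left he)
    · rw [φf, φt]; intro he
      rw [List.append_assoc, List.append_assoc] at he
      have h2 := List.append_cancel_left he
      simp at h2
    · rw [φnil, φt]; intro he
      have := congrArg List.length he; simp at this
    · rw [φt, φf]; intro he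
      rw [List.append_assoc, List.append_assoc] at he
      have h2 := List.append_cancel_left he
      simp at h2
    · rw [φt, φt]; intro he
      have hyy : y ≠ y' := fun h => hne (by rw [h])
      exact i2 _ hy _ hy' hyy (List.append_cancel_left he)
  · intro w hw w' hw' hlex
    rw [mem_tau_iff hn] at hw hw'
    rcases hw with rfl | ⟨x, hx, rfl⟩ | ⟨y, hy, rfl⟩ <;>
      rcases hw' with rfl | ⟨x', hx', rfl⟩ | ⟨y', hy', rfl⟩
    · exact absurd hlex (not_wlex_nil _)
    · rw [φnil, φf]
      have : wlex (v ++ []) ((v ++ [false]) ++ ψ1 x') := by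
        rw [List.append_assoc]
        exact (wlex_append v).2 (wlex_nil_cons _ _)
      simpa using this
    · rw [φnil, φt]
      have : wlex (v ++ []) ((v ++ [true]) ++ ψ2 y') := by
        rw [List.append_assoc]
        exact (wlex_append v).2 (wlex_nil_cons _ _)
      simpa using this
    · exact absurd hlex (not_wlex_nil _)
    · rw [φf, φf]
      exact (wlex_append _).2 (o1 _ hx _ hx' ((wlex_cons_iff false).1 hlex))
    · rw [φf, φt, List.append_assoc, List.append_assoc]
      exact (wlex_append v).2 (wlex_false_true _ _)
    · exact absurd hlex (not_wlex_nil _)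
    · exfalso
      cases hlex with
      | rel h => exact absurd h (by decide)
    · rw [φt, φt]
      exact (wlex_append _).2 (o2 _ hy _ hy' ((wlex_cons_iff true).1 hlex))
  · intro w hw w' hw'
    rw [mem_tau_iff hn] at hw hw'
    rcases hw with rfl | ⟨x, hx, rfl⟩ | ⟨y, hy, rfl⟩ <;>
      rcases hw' with rfl | ⟨x', hx', rfl⟩ | ⟨y', hy', rfl⟩
    · rw [lcp_nil_left, φnil, lcp_self]
    · rw [lcp_nil_left, φnil, φf, List.append_assoc, lcp_self_append]
    · rw [lcp_nil_left, φnil, φt, List.append_assoc, lcp_self_append]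
    · rw [lcp_nil_right, φnil, φf, List.append_assoc, lcp_append_self]
    · rw [lcp_cons_same, φf, φf, φf, lcp_append, ← l1 _ hx _ hx']
    · rw [show lcp (false :: x) (true :: y') = [] from lcp_cons_ne (by decide) _ _,
        φnil, φf, φt, List.append_assoc, List.append_assoc, List.singleton_append,
        List.singleton_append, lcp_append,
        show lcp (false :: ψ1 x) (true :: ψ2 y') = [] from lcp_cons_ne (by decide) _ _,
        List.append_nil]
    · rw [lcp_nil_right, φnil, φt, List.append_assoc, lcp_append_self]
    · rw [show lcp (true :: y) (false :: x') = [] from lcp_cons_ne (by decide) _ _,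
        φnil, φt, φf, List.append_assoc, List.append_assoc, List.singleton_append,
        List.singleton_append, lcp_append,
        show lcp (true :: ψ2 y) (false :: ψ1 x') = [] from lcp_cons_ne (by decide) _ _,
        List.append_nil]
    · rw [lcp_cons_same, φt, φt, φt, lcp_append, ← l2 _ hy _ hy']

/- ## the split lemma -/

lemma embeds_split {s : Set Word} (hs : ∀ u ∈ s, ∀ v : Word, v <+: u → v ∈ s) {n : ℕ}
    (hn : 1 ≤ n) (h : Embeds (tau n) s) :
    ∃ v : Word, v ++ [false] ∈ s ∧ v ++ [true] ∈ s ∧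
      Embeds (tau (n / 2)) (subtreeAt (v ++ [false]) s) ∧
      Embeds (tau ((n - 1) / 2)) (subtreeAt (v ++ [true]) s) := by
  obtain ⟨φ, mφ, iφ, oφ, lφ⟩ := h
  set p := φ [] with hp
  have hnil : ([] : Word) ∈ tau n := nil_mem_tau n
  have hfm : [false] ∈ tau n := false_mem_tau hn
  have htm : [true] ∈ tau n := true_mem_tau hn
  have hfx : ∀ x ∈ tau (n/2), false :: x ∈ tau n := fun x hx =>
    (mem_tau_iff hn).2 (Or.inr (Or.inl ⟨x, hx, rfl⟩))
  have hty : ∀ y ∈ tau ((n-1)/2), true :: y ∈ tau n := fun y hy =>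
    (mem_tau_iff hn).2 (Or.inr (Or.inr ⟨y, hy, rfl⟩))
  -- each image of a nonempty word properly extends p
  have hext : ∀ w ∈ tau n, w ≠ [] → ∃ (c : Bool) (r : Word), φ w = p ++ c :: r := by
    intro w hw hwne
    have hqpre : p <+: φ w := by
      have hq : φ (lcp w []) = lcp (φ w) (φ []) := lφ _ hw _ hnil
      rw [lcp_nil_right] at hq
      rw [hp, hq]
      exact lcp_prefix_left _ _
    obtain ⟨r0, hr0⟩ := hqpre
    have hne : p ≠ φ w := iφ _ hnil _ hw (Ne.symm hwne)
    match r0, hr0 with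
    | [], h0 => exact absurd (by rw [← h0]; simp) hne
    | c :: r, h0 => exact ⟨c, r, h0.symm⟩
  -- across lcp is p
  have hcross : ∀ x ∈ tau (n/2), ∀ y ∈ tau ((n-1)/2),
      lcp (φ (false :: x)) (φ (true :: y)) = p := by
    intro x hx y hy
    have := lφ _ (hfx x hx) _ (hty y hy)
    rw [lcp_cons_ne (by decide)] at this
    rw [← this, hp]
  have hfalse : ∀ x ∈ tau (n/2), ∃ r : Word, φ (false :: x) = p ++ false :: r := by
    intro x hx
    obtain ⟨c, r, hcr⟩ := hext _ (hfx x hx) (by simp)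
    obtain ⟨c', r', hcr'⟩ := hext _ (hty [] (nil_mem_tau _)) (by simp)
    have hl := hcross x hx [] (nil_mem_tau _)
    rw [hcr, hcr', lcp_append] at hl
    have hlcp0 : lcp (c :: r) (c' :: r') = [] := by
      have := hl.trans (List.append_nil p).symm
      exact List.append_cancel_left this
    have hcc : c ≠ c' := by
      intro he; rw [he, lcp_cons_same] at hlcp0; simp at hlcp0
    have ho := oφ _ (hfx x hx) _ (hty [] (nil_mem_tau _)) (wlex_false_true x [])
    rw [hcr, hcr'] at ho
    have ho' : wlex (c :: r) (c' :: r') := (wlex_append p).1 ho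
    have hc : c = false := by
      cases ho' with
      | cons h => exact absurd rfl hcc
      | rel h =>
        cases c <;> cases c' <;>
          first | rfl | (exact absurd rfl hcc) | (exact absurd h (by decide))
    exact ⟨r, by rw [hcr, hc]⟩
  have htrue : ∀ y ∈ tau ((n-1)/2), ∃ r : Word, φ (true :: y) = p ++ true :: r := by
    intro y hy
    obtain ⟨c, r, hcr⟩ := hext _ (hty y hy) (by simp)
    obtain ⟨r', hcr'⟩ := hfalse [] (nil_mem_tau _)
    have hl := hcross [] (nil_mem_tau _) y hy
    rw [hcr, hcr', lcp_append] at hl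
    have hlcp0 : lcp (false :: r') (c :: r) = [] := by
      have := hl.trans (List.append_nil p).symm
      exact List.append_cancel_left this
    have hcc : (false : Bool) ≠ c := by
      intro he; rw [← he, lcp_cons_same] at hlcp0; simp at hlcp0
    have hc : c = true := by cases c <;> simp_all
    exact ⟨r, by rw [hcr, hc]⟩
  set ψ1 : Word → Word := fun x => List.drop (p.length + 1) (φ (false :: x)) with hψ1
  set ψ2 : Word → Word := fun y => List.drop (p.length + 1) (φ (true :: y)) with hψ2
  have hφf : ∀ x ∈ tau (n/2), φ (false :: x) = (p ++ [false]) ++ ψ1 x := by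
    intro x hx
    obtain ⟨r, hr⟩ := hfalse x hx
    have : ψ1 x = r := by
      rw [hψ1]
      simp only [hr]
      rw [show p ++ false :: r = (p ++ [false]) ++ r by simp]
      simpa using List.drop_left (p ++ [false]) r
    rw [this, hr]; simp
  have hφt : ∀ y ∈ tau ((n-1)/2), φ (true :: y) = (p ++ [true]) ++ ψ2 y := by
    intro y hy
    obtain ⟨r, hr⟩ := htrue y hy
    have : ψ2 y = r := by
      rw [hψ2]
      simp only [hr]
      rw [show p ++ true :: r = (p ++ [true]) ++ r by simp]
      simpa using List.drop_left (p ++ [true]) r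
    rw [this, hr]; simp
  refine ⟨p, ?_, ?_, ⟨ψ1, ?_, ?_, ?_, ?_⟩, ⟨ψ2, ?_, ?_, ?_, ?_⟩⟩
  · exact hs _ (mφ _ hfm) _ ⟨ψ1 [], (hφf [] (nil_mem_tau _)).symm⟩
  · exact hs _ (mφ _ htm) _ ⟨ψ2 [], (hφt [] (nil_mem_tau _)).symm⟩
  · intro x hx
    show (p ++ [false]) ++ ψ1 x ∈ s
    rw [← hφf x hx]
    exact mφ _ (hfx x hx)
  · intro x hx x' hx' hne
    intro he
    have : φ (false :: x) = φ (false :: x') := by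
      rw [hφf x hx, hφf x' hx', he]
    exact iφ _ (hfx x hx) _ (hfx x' hx') (by simpa using hne) this
  · intro x hx x' hx' hlt
    have := oφ _ (hfx x hx) _ (hfx x' hx') ((wlex_cons_iff false).2 hlt)
    rw [hφf x hx, hφf x' hx'] at this
    exact (wlex_append _).1 this
  · intro x hx x' hx'
    have hmem : lcp x x' ∈ tau (n/2) :=
      tau_prefix_closed _ _ hx _ (lcp_prefix_left x x')
    have := lφ _ (hfx x hx) _ (hfx x' hx')
    rw [lcp_cons_same] at this
    rw [hφf _ hmem, hφf x hx, hφf x' hx', lcp_append] at this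
    exact List.append_cancel_left this
  · intro y hy
    show (p ++ [true]) ++ ψ2 y ∈ s
    rw [← hφt y hy]
    exact mφ _ (hty y hy)
  · intro y hy y' hy' hne
    intro he
    have : φ (true :: y) = φ (true :: y') := by
      rw [hφt y hy, hφt y' hy', he]
    exact iφ _ (hty y hy) _ (hty y' hy') (by simpa using hne) this
  · intro y hy y' hy' hlt
    have := oφ _ (hty y hy) _ (hty y' hy') ((wlex_cons_iff true).2 hlt)
    rw [hφt y hy, hφt y' hy'] at this
    exact (wlex_append _).1 this
  · intro y hy y' hy'
    have hmem : lcp y y' ∈ tau ((n-1)/2) :=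
      tau_prefix_closed _ _ hy _ (lcp_prefix_left y y')
    have := lφ _ (hty y hy) _ (hty y' hy')
    rw [lcp_cons_same] at this
    rw [hφt _ hmem, hφt y hy, hφt y' hy', lcp_append] at this
    exact List.append_cancel_left this

/- ## RHS machinery -/

lemma bddAbove_embedsSet {t : Set Word} (ht : t.Finite) : BddAbove {r | Embeds (tau r) t} := by
  refine ⟨t.ncard, fun r hr => ?_⟩
  exact le_trans (le_tau_ncard r) (Embeds.ncard_le hr ht)

lemma embeds_tau_step : ∀ s : ℕ, Embeds (tau s) (tau (s + 1)) := by
  intro s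
  induction s using Nat.strong_induction_on with
  | _ s ih =>
    match s with
    | 0 => exact embeds_tau_zero (nil_mem_tau 1)
    | (m+1) =>
      have h1 : (1:ℕ) ≤ m + 1 := by omega
      have h2 : (1:ℕ) ≤ m + 2 := by omega
      have e1 : Embeds (tau ((m+1) / 2)) (subtreeAt ([] ++ [false]) (tau (m+2))) := by
        rw [List.nil_append, subtreeAt_false_tau h2]
        rcases Nat.lt_or_ge ((m+1)/2) ((m+2)/2) with hlt | hge
        · have : (m+2)/2 = (m+1)/2 + 1 := by omega
          rw [this]; exact ih _ (by omega)
        · have : (m+2)/2 = (m+1)/2 := by omega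
          rw [this]; exact embeds_refl _
      have e2 : Embeds (tau ((m+1-1) / 2)) (subtreeAt ([] ++ [true]) (tau (m+2))) := by
        rw [List.nil_append, subtreeAt_true_tau h2, show (m+1-1)/2 = m/2 by omega,
          show (m+2-1)/2 = (m+1)/2 by omega]
        rcases Nat.lt_or_ge (m/2) ((m+1)/2) with hlt | hge
        · rw [show (m+1)/2 = m/2 + 1 by omega]; exact ih _ (by omega)
        · rw [show (m+1)/2 = m/2 by omega]; exact embeds_refl _
      exact embeds_node h1 [] (nil_mem_tau (m+2)) e1 e2
  
lemma embeds_tau_mono {r s : ℕ} (h : r ≤ s) : Embeds (tau r) (tau s) := by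
  induction h with
  | refl => exact embeds_refl _
  | step _ ih => exact ih.trans (embeds_tau_step _)

lemma embeds_iff_le_RHS {t : Set Word} (ht : t.Finite) (h0 : [] ∈ t) {r : ℕ} :
    Embeds (tau r) t ↔ r ≤ RHS t := by
  constructor
  · intro h
    exact le_csSup (bddAbove_embedsSet ht) h
  · intro h
    have hmem : RHS t ∈ {r | Embeds (tau r) t} :=
      Nat.sSup_mem ⟨0, embeds_tau_zero h0⟩ (bddAbove_embedsSet ht)
    exact (embeds_tau_mono h).trans hmem

lemma subtreeAt_subtreeAt (u v : Word) (t : Set Word) :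
    subtreeAt v (subtreeAt u t) = subtreeAt (u ++ v) t := by
  ext w
  simp [subtreeAt, List.append_assoc]

lemma subtreeAt_finite {t : Set Word} (ht : t.Finite) (u : Word) : (subtreeAt u t).Finite := by
  have : subtreeAt u t = (fun w => u ++ w) ⁻¹' t := rfl
  rw [this]
  exact ht.preimage (Set.injOn_of_injective (fun a b => List.append_cancel_left))

lemma nil_mem_subtreeAt {t : Set Word} {u : Word} (hu : u ∈ t) : [] ∈ subtreeAt u t := by
  show u ++ [] ∈ t
  simpa using hu

lemma Sv_append_le {t : Set Word} (ht : t.Finite) (u v : Word) (huv : u ++ v ∈ t) :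
    Sv (u ++ v) t ≤ Sv u t := by
  unfold Sv RHS
  refine csSup_le ⟨0, embeds_tau_zero (nil_mem_subtreeAt huv)⟩ ?_
  intro r hr
  apply le_csSup (bddAbove_embedsSet (subtreeAt_finite ht u))
  exact Embeds.trans hr (embeds_subtree_append u v t)

/-- The set of internal vertices of `t` (those having a child in `t`). -/
def internals (t : Set Word) : Set Word :=
  {u | u ∈ t ∧ (u ++ [false] ∈ t ∨ u ++ [true] ∈ t)}

/-- Let `t ≠ {∅}` be a full binary tree with `h = S(t) ≥ 1` and let `u` be the lexicographically
maximal vertex with `S_u(t) = h`. With `t^free = θ_{u1}t` if `h` even and `θ_{u2}t` if `h` odd,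
and `t^fix = θ_{u2}t` if `h` even and `θ_{u1}t` if `h` odd (`false` = child 1, `true` = child 2),
one has `S(t^fix) = ⌈h/2⌉ − 1 = ⌊(h−1)/2⌋` and `⌊h/2⌋ ≤ S(t^free) ≤ h − 1`. -/
theorem rhs_free_fix (t : Set Word) (u : Word) (h : ℕ)
    (ht : IsFullBinaryTree t) (hh : RHS t = h) (h1 : 1 ≤ h)
    (hu : u ∈ t) (humax : Sv u t = h)
    (hlexmax : ∀ w ∈ t, Sv w t = h → w = u ∨ wlex w u) :
    Sv (u ++ [decide (h % 2 = 0)]) t = (h + 1) / 2 - 1 ∧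
    Sv (u ++ [decide (h % 2 = 0)]) t = (h - 1) / 2 ∧
    h / 2 ≤ Sv (u ++ [decide (h % 2 = 1)]) t ∧
    Sv (u ++ [decide (h % 2 = 1)]) t ≤ h - 1 := by
  obtain ⟨⟨htfin, htnil, htpc⟩, htfull⟩ := ht
  have hsfin : (subtreeAt u t).Finite := subtreeAt_finite htfin u
  have hsnil : [] ∈ subtreeAt u t := nil_mem_subtreeAt hu
  have hspc : ∀ w ∈ subtreeAt u t, ∀ v : Word, v <+: w → v ∈ subtreeAt u t := by
    intro w hw v hv
    show u ++ v ∈ t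
    obtain ⟨c, rfl⟩ := hv
    exact htpc _ hw (u ++ v) ⟨c, by simp⟩
  have hembed : Embeds (tau h) (subtreeAt u t) :=
    (embeds_iff_le_RHS hsfin hsnil).2 humax.ge
  obtain ⟨v, hvf, hvt, e1, e2⟩ := embeds_split hspc h1 hembed
  have hvs : v ∈ subtreeAt u t := hspc _ hvf v ⟨[false], rfl⟩
  have hvmem : u ++ v ∈ t := hvs
  -- recompose at u ++ v
  have hkey1 : subtreeAt ([] ++ [false]) (subtreeAt (u ++ v) t)
      = subtreeAt (v ++ [false]) (subtreeAt u t) := by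
    rw [subtreeAt_subtreeAt, subtreeAt_subtreeAt, List.nil_append, List.append_assoc]
  have hkey2 : subtreeAt ([] ++ [true]) (subtreeAt (u ++ v) t)
      = subtreeAt (v ++ [true]) (subtreeAt u t) := by
    rw [subtreeAt_subtreeAt, subtreeAt_subtreeAt, List.nil_append, List.append_assoc]
  have hcomp : Embeds (tau h) (subtreeAt (u ++ v) t) := by
    refine embeds_node h1 [] (nil_mem_subtreeAt hvmem) ?_ ?_
    · rw [hkey1]; exact e1
    · rw [hkey2]; exact e2
  have hSuv : Sv (u ++ v) t = h := by
    have hge : h ≤ Sv (u ++ v) t :=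
      (embeds_iff_le_RHS (subtreeAt_finite htfin _) (nil_mem_subtreeAt hvmem)).1 hcomp
    have hle : Sv (u ++ v) t ≤ h := humax ▸ Sv_append_le htfin u v hvmem
    omega
  have hv0 : v = [] := by
    rcases hlexmax _ hvmem hSuv with heq | hlt
    · have := congrArg List.length heq
      simp at this
      exact this
    · exfalso
      have h2 : wlex (u ++ v) (u ++ []) := by simpa using hlt
      exact not_wlex_nil _ ((wlex_append u).1 h2)
  subst hv0
  have hufmem : u ++ [false] ∈ t := by exact hvf
  have hutmem : u ++ [true] ∈ t := by exact hvt
  have hsub_f : subtreeAt (([] : Word) ++ [false]) (subtreeAt u t) = subtreeAt (u ++ [false]) t := by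
    rw [subtreeAt_subtreeAt, List.nil_append]
  have hsub_t : subtreeAt (([] : Word) ++ [true]) (subtreeAt u t) = subtreeAt (u ++ [true]) t := by
    rw [subtreeAt_subtreeAt, List.nil_append]
  have hffin : (subtreeAt (u ++ [false]) t).Finite := subtreeAt_finite htfin _
  have htfin' : (subtreeAt (u ++ [true]) t).Finite := subtreeAt_finite htfin _
  have hfnil : [] ∈ subtreeAt (u ++ [false]) t := nil_mem_subtreeAt hufmem
  have htnil' : [] ∈ subtreeAt (u ++ [true]) t := nil_mem_subtreeAt hutmem
  have ha_lb : h / 2 ≤ Sv (u ++ [false]) t := by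
    refine (embeds_iff_le_RHS hffin hfnil).1 ?_
    rw [← hsub_f]; exact e1
  have hb_lb : (h - 1) / 2 ≤ Sv (u ++ [true]) t := by
    refine (embeds_iff_le_RHS htfin' htnil').1 ?_
    rw [← hsub_t]; exact e2
  have hchild_ne : ∀ c : Bool, u ++ [c] ∈ t → Sv (u ++ [c]) t ≠ h := by
    intro c hcmem he
    rcases hlexmax _ hcmem he with heq | hlt
    · have := congrArg List.length heq
      simp at this
    · have h2 : wlex (u ++ [c]) (u ++ []) := by simpa using hlt
      exact not_wlex_nil _ ((wlex_append u).1 h2)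
  have ha_ub : Sv (u ++ [false]) t ≤ h - 1 := by
    have := humax ▸ Sv_append_le htfin u [false] hufmem
    have := hchild_ne false hufmem
    omega
  have hb_ub : Sv (u ++ [true]) t ≤ h - 1 := by
    have := humax ▸ Sv_append_le htfin u [true] hutmem
    have := hchild_ne true hutmem
    omega
  have hkey : ¬ ((h + 1) / 2 ≤ Sv (u ++ [false]) t ∧ h / 2 ≤ Sv (u ++ [true]) t) := by
    rintro ⟨haa, hbb⟩
    have E1 : Embeds (tau ((h + 1) / 2)) (subtreeAt (([] : Word) ++ [false]) (subtreeAt u t)) := by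
      rw [hsub_f]
      exact (embeds_iff_le_RHS hffin hfnil).2 haa
    have E2 : Embeds (tau ((h + 1 - 1) / 2)) (subtreeAt (([] : Word) ++ [true]) (subtreeAt u t)) := by
      rw [hsub_t, show (h + 1 - 1) / 2 = h / 2 by omega]
      exact (embeds_iff_le_RHS htfin' htnil').2 hbb
    have hfin := (embeds_iff_le_RHS hsfin hsnil).1 (embeds_node (by omega : 1 ≤ h + 1) [] hsnil E1 E2)
    have humax' : RHS (subtreeAt u t) = h := humax
    omega
  rcases Nat.mod_two_eq_zero_or_one h with hp | hp
  · have hd0 : decide (h % 2 = 0) = true := by simp [hp]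
    have hd1 : decide (h % 2 = 1) = false := by simp [hp]
    rw [hd0, hd1]
    have hb2 : ¬ (h / 2 ≤ Sv (u ++ [true]) t) := fun hbb => hkey ⟨by omega, hbb⟩
    exact ⟨by omega, by omega, by omega, by omega⟩
  · have hd0 : decide (h % 2 = 0) = false := by simp [hp]
    have hd1 : decide (h % 2 = 1) = true := by simp [hp]
    rw [hd0, hd1]
    have ha2 : ¬ ((h + 1) / 2 ≤ Sv (u ++ [false]) t) := fun haa => hkey ⟨haa, by omega⟩
    exact ⟨by omega, by omega, by omega, by omega⟩
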